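/- Let 1 ≤ p < ∞. For every ε > 0 there exists N such that for all n ≥ N and every real algebraic polynomial P of degree at most n, (∫_{−1}^1 |√(1−x²)·P'(x)|^p · (π√(1−x²))^{−1} dx)^{1/p} ≤ (1+ε) · n · (∫_{−1}^1 |P(x)|^p · (π√(1−x²))^{−1} dx)^{1/p} (the L^p Bernstein-type inequality of Nagy and Toókos on [−1,1], where the equilibrium density of [−1,1] is ω(x) = 1/(π√(1−x²))). -/

import Mathlib

open Real Set Polynomial MeasureTheory

noncomputable def bPh (n k : ℕ) : ℝ := (2*k+1)*Real.pi/(4*n)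

noncomputable def bTh (n k : ℕ) : ℝ := (2*k+1)*Real.pi/(2*n)

lemma bTh_eq (n k : ℕ) : bTh n k = 2 * bPh n k := by
  unfold bTh bPh; ring

lemma bPh_pos {n : ℕ} (hn : 1 ≤ n) (k : ℕ) : 0 < bPh n k := by
  unfold bPh
  have : (0:ℝ) < n := by exact_mod_cast hn
  positivity

lemma bPh_lt_pi {n k : ℕ} (hk : k < 2*n) : bPh n k < π := by
  have hn : (0:ℝ) < n := by
    have : 0 < n := by omega
    exact_mod_cast this
  unfold bPh
  rw [div_lt_iff₀ (by positivity)]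
  have h : (2*(k:ℝ)+1) < 4*n := by
    have h0 : (2*k+1 : ℕ) < 4*n := by omega
    exact_mod_cast h0
  have := mul_lt_mul_of_pos_right h Real.pi_pos
  linarith

lemma sin_bPh_pos {n k : ℕ} (hn : 1 ≤ n) (hk : k < 2*n) : 0 < Real.sin (bPh n k) :=
  Real.sin_pos_of_pos_of_lt_pi (bPh_pos hn k) (bPh_lt_pi hk)

lemma bPh_compl {n k : ℕ} (hk : k < 2*n) : bPh n (2*n-1-k) = π - bPh n k := by
  have hnR : (0:ℝ) < n := by
    have : 0 < n := by omega
    exact_mod_cast this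
  have h1 : (2*n-1-k) = 2*n - (k+1) := by omega
  have h2 : ((2*n - (k+1) : ℕ) : ℝ) = 2*n - (k+1) := by
    have h3 : (k+1) ≤ 2*n := by omega
    push_cast [Nat.cast_sub h3]; ring
  unfold bPh
  rw [h1, h2]
  field_simp
  ring

lemma bTh_compl {n k : ℕ} (hk : k < 2*n) : bTh n (2*n-1-k) = 2*π - bTh n k := by
  rw [bTh_eq, bTh_eq, bPh_compl hk]; ring

lemma neg_one_pow_compl {n k : ℕ} (hk : k < 2*n) : (-1:ℝ)^(2*n-1-k) = -(-1:ℝ)^k := by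
  have hmul : (-1:ℝ)^(2*n-1-k) * (-1:ℝ)^k = (-1:ℝ)^(2*n-1) := by
    rw [← pow_add]; congr 1; omega
  have h4 : (-1:ℝ)^(2*n-1) = -1 := Odd.neg_one_pow ⟨n-1, by omega⟩
  have hb : (-1:ℝ)^k * (-1:ℝ)^k = 1 := by
    rw [← pow_add]
    exact Even.neg_one_pow ⟨k, by ring⟩
  calc (-1:ℝ)^(2*n-1-k) = (-1:ℝ)^(2*n-1-k) * ((-1:ℝ)^k * (-1:ℝ)^k) := by rw [hb, mul_one]
    _ = ((-1:ℝ)^(2*n-1-k) * (-1:ℝ)^k) * (-1:ℝ)^k := by ring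
    _ = (-1) * (-1:ℝ)^k := by rw [hmul, h4]
    _ = -(-1:ℝ)^k := by ring

lemma sumA (n : ℕ) (hn : 1 ≤ n) (m : ℕ) :
    ∑ k ∈ Finset.range (2*n), (-1:ℝ)^k * ((Real.sin (bPh n k))^2)⁻¹ * Real.cos (m * bTh n k) = 0 := by
  refine Finset.sum_involution (fun k _ => 2*n-1-k) ?_ ?_ ?_ ?_
  · intro k hk
    have hk' : k < 2*n := Finset.mem_range.mp hk
    have h1 : Real.sin (bPh n (2*n-1-k)) = Real.sin (bPh n k) := by
      rw [bPh_compl hk', Real.sin_pi_sub]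
    have h2 : Real.cos ((m:ℝ) * bTh n (2*n-1-k)) = Real.cos (m * bTh n k) := by
      rw [bTh_compl hk']
      have he : (m:ℝ) * (2*π - bTh n k) = (m:ℝ)*(2*π) - m * bTh n k := by ring
      rw [he, Real.cos_sub, Real.cos_nat_mul_two_pi]
      have hs : Real.sin ((m:ℝ)*(2*π)) = 0 := by
        have he2 : (m:ℝ)*(2*π) = (2*m : ℕ) * π := by push_cast; ring
        rw [he2, Real.sin_nat_mul_pi]
      rw [hs]; ring
    rw [h1, h2, neg_one_pow_compl hk']
    ring
  · intro k hk _
    have : k < 2*n := Finset.mem_range.mp hk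
    show ¬ (2*n-1-k = k)
    omega
  · intro k hk
    have : k < 2*n := Finset.mem_range.mp hk
    show (2*n-1-k) ∈ Finset.range (2*n)
    exact Finset.mem_range.mpr (by omega)
  · intro k hk
    have : k < 2*n := Finset.mem_range.mp hk
    show 2*n-1-(2*n-1-k) = k
    omega

lemma sumH (n j : ℕ) (hj1 : 1 ≤ j) (hjn : j < n) :
    ∑ k ∈ Finset.range (2*n), (-1:ℝ)^k * Real.sin (j * bTh n k) = 0 := by
  have hn : 1 ≤ n := by omega
  have hnR : (0:ℝ) < n := by exact_mod_cast hn
  set b : ℝ := j * π / (2*n) with hb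
  set q : ℂ := -Complex.exp ((2*b : ℝ) * Complex.I) with hq
  have hqne : q ≠ 1 := by
    intro h
    have hexp : Complex.exp ((2*b : ℝ) * Complex.I) = -1 := by
      rw [hq] at h
      linear_combination -h
    have hre : Real.cos (2*b) = -1 := by
      have := Complex.exp_ofReal_mul_I_re (2*b)
      rw [hexp] at this
      simpa using this.symm
    have hjR : (j:ℝ) < n := by exact_mod_cast hjn
    have h2b : 2*b = π := by
      have hub : 2*b ≤ π := by
        rw [hb]
        have e : 2*((j:ℝ)*π/(2*n)) = (j:ℝ)*π/n := by field_simp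
        rw [e, div_le_iff₀ hnR]
        nlinarith [Real.pi_pos]
      have hmem : 2*b ∈ Set.Icc 0 π := ⟨by positivity, hub⟩
      exact Real.injOn_cos hmem ⟨Real.pi_pos.le, le_refl _⟩ (by rw [hre, Real.cos_pi])
    have : (j:ℝ) = n := by
      rw [hb] at h2b
      field_simp at h2b
      nlinarith [Real.pi_pos, h2b]
    have : j = n := by exact_mod_cast this
    omega
  have hq2n : q^(2*n) = 1 := by
    have h1 : q^(2*n) = (Complex.exp ((2*b:ℝ) * Complex.I))^(2*n) := by
      rw [hq, neg_pow]
      have : (-1:ℂ)^(2*n) = 1 := Even.neg_one_pow ⟨n, by ring⟩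
      rw [this, one_mul]
    have he : ((2*n : ℕ) : ℂ) * ((2*b : ℝ) * Complex.I) = ((j:ℤ) : ℂ) * (2 * (π:ℂ) * Complex.I) := by
      rw [hb]
      have hne : ((n:ℂ)) ≠ 0 := by exact_mod_cast hnR.ne'
      push_cast
      field_simp
    rw [h1, ← Complex.exp_nat_mul, he, Complex.exp_int_mul_two_pi_mul_I]
  have hgeom : ∑ k ∈ Finset.range (2*n), q^k = 0 := by
    rw [geom_sum_eq hqne, hq2n]
    simp
  have hconv : ∀ k, (((-1:ℝ)^k : ℝ) : ℂ) * Complex.exp ((j * bTh n k : ℝ) * Complex.I) =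
      Complex.exp ((b:ℝ) * Complex.I) * q^k := by
    intro k
    have h1 : (j : ℝ) * bTh n k = b + 2*b*k := by
      rw [hb]; unfold bTh; field_simp; ring
    have h2 : q^k = ((-1:ℂ))^k * Complex.exp ((k:ℂ) * ((2*b:ℝ) * Complex.I)) := by
      rw [hq, neg_pow, Complex.exp_nat_mul]
    rw [h1, h2]
    have h3 : ((b + 2*b*(k:ℝ) : ℝ) : ℂ) * Complex.I
        = (b:ℂ) * Complex.I + (k:ℂ) * (((2*b:ℝ):ℂ) * Complex.I) := by
      push_cast
      ring
    rw [h3, Complex.exp_add]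
    have h4 : (((-1:ℝ)^k : ℝ) : ℂ) = (-1:ℂ)^k := by push_cast; ring
    rw [h4]
    ring
  have hZ : ∑ k ∈ Finset.range (2*n),
      ((((-1:ℝ)^k : ℝ) : ℂ) * Complex.exp ((j * bTh n k : ℝ) * Complex.I)) = 0 := by
    rw [Finset.sum_congr rfl (fun k _ => hconv k), ← Finset.mul_sum, hgeom, mul_zero]
  calc ∑ k ∈ Finset.range (2*n), (-1:ℝ)^k * Real.sin (j * bTh n k)
      = ∑ k ∈ Finset.range (2*n),
          ((((-1:ℝ)^k : ℝ) : ℂ) * Complex.exp ((j * bTh n k : ℝ) * Complex.I)).im := by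
        refine Finset.sum_congr rfl fun k _ => ?_
        rw [Complex.mul_im]
        simp only [Complex.ofReal_re, Complex.ofReal_im, Complex.exp_ofReal_mul_I_im,
          zero_mul, add_zero]
    _ = (∑ k ∈ Finset.range (2*n),
          ((((-1:ℝ)^k : ℝ) : ℂ) * Complex.exp ((j * bTh n k : ℝ) * Complex.I))).im := by
        rw [Complex.im_sum]
    _ = 0 := by rw [hZ]; rfl

noncomputable def sS (n m : ℕ) : ℝ :=
  ∑ k ∈ Finset.range (2*n), (-1:ℝ)^k * ((Real.sin (bPh n k))^2)⁻¹ * Real.sin (m * bTh n k)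

noncomputable def gG (n m : ℕ) : ℝ :=
  ∑ k ∈ Finset.range (2*n), (-1:ℝ)^k * Real.cos ((2*(m:ℝ)-1) * bPh n k) / Real.sin (bPh n k)

lemma sS_zero (n : ℕ) : sS n 0 = 0 := by
  unfold sS
  simp

lemma sS_step (n : ℕ) (hn : 1 ≤ n) (m : ℕ) : sS n (m+1) = sS n m + 2 * gG n (m+1) := by
  have h : sS n (m+1) - sS n m = 2 * gG n (m+1) := by
    unfold sS gG
    rw [← Finset.sum_sub_distrib, Finset.mul_sum]
    refine Finset.sum_congr rfl fun k hk => ?_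
    have hsk := sin_bPh_pos hn (Finset.mem_range.mp hk)
    have hfac : (-1:ℝ)^k * ((Real.sin (bPh n k))^2)⁻¹ * Real.sin (((m+1:ℕ):ℝ) * bTh n k)
        - (-1:ℝ)^k * ((Real.sin (bPh n k))^2)⁻¹ * Real.sin ((m:ℝ) * bTh n k)
        = (-1:ℝ)^k * ((Real.sin (bPh n k))^2)⁻¹
            * (Real.sin (((m:ℝ)+1) * bTh n k) - Real.sin ((m:ℝ) * bTh n k)) := by
      push_cast
      ring
    rw [hfac, Real.sin_sub_sin]
    rw [bTh_eq]
    have e1 : (((m:ℝ)+1) * (2 * bPh n k) - (m:ℝ) * (2 * bPh n k)) / 2 = bPh n k := by ring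
    have e2 : (((m:ℝ)+1) * (2 * bPh n k) + (m:ℝ) * (2 * bPh n k)) / 2
        = (2*(((m+1:ℕ)):ℝ)-1) * bPh n k := by push_cast; ring
    rw [e1, e2]
    field_simp
  linarith

lemma gG_step (n m : ℕ) (hn : 1 ≤ n) (hm1 : 1 ≤ m) (hmn : m < n) : gG n (m+1) = gG n m := by
  have h : gG n (m+1) - gG n m = 0 := by
    unfold gG
    rw [← Finset.sum_sub_distrib]
    have hcong : ∀ k ∈ Finset.range (2*n),
        (-1:ℝ)^k * Real.cos ((2*((m+1:ℕ):ℝ)-1) * bPh n k) / Real.sin (bPh n k)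
          - (-1:ℝ)^k * Real.cos ((2*(m:ℝ)-1) * bPh n k) / Real.sin (bPh n k)
        = (-2) * ((-1:ℝ)^k * Real.sin (m * bTh n k)) := by
      intro k hk
      have hsk := sin_bPh_pos hn (Finset.mem_range.mp hk)
      have hfac : (-1:ℝ)^k * Real.cos ((2*((m+1:ℕ):ℝ)-1) * bPh n k) / Real.sin (bPh n k)
          - (-1:ℝ)^k * Real.cos ((2*(m:ℝ)-1) * bPh n k) / Real.sin (bPh n k)
          = (-1:ℝ)^k * (Real.cos ((2*(m:ℝ)+1) * bPh n k) - Real.cos ((2*(m:ℝ)-1) * bPh n k))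
              / Real.sin (bPh n k) := by
        push_cast
        ring
      rw [hfac, Real.cos_sub_cos]
      have e1 : ((2*(m:ℝ)+1) * bPh n k + (2*(m:ℝ)-1) * bPh n k) / 2 = (m:ℝ) * (2 * bPh n k) := by
        ring
      have e2 : ((2*(m:ℝ)+1) * bPh n k - (2*(m:ℝ)-1) * bPh n k) / 2 = bPh n k := by ring
      rw [e1, e2, ← bTh_eq]
      field_simp
    rw [Finset.sum_congr rfl hcong, ← Finset.mul_sum, sumH n m hm1 hmn, mul_zero]
  linarith

lemma gG_const (n m : ℕ) (hn : 1 ≤ n) (hm1 : 1 ≤ m) (hmn : m ≤ n) : gG n m = gG n 1 := by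
  induction m with
  | zero => omega
  | succ m ih =>
    rcases Nat.eq_or_lt_of_le hm1 with h | h
    · rw [← h]
    · have hm : 1 ≤ m := by omega
      rw [gG_step n m hn hm (by omega)]
      exact ih hm (by omega)

lemma sS_val (n : ℕ) (hn : 1 ≤ n) : ∀ m, m ≤ n → sS n m = 2 * m * gG n 1 := by
  intro m
  induction m with
  | zero => intro _; simp [sS_zero]
  | succ m ih =>
    intro hm
    rw [sS_step n hn m, ih (by omega), gG_const n (m+1) hn (by omega) hm]
    push_cast
    ring

lemma sS_top (n : ℕ) (hn : 1 ≤ n) :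
    sS n n = ∑ k ∈ Finset.range (2*n), ((Real.sin (bPh n k))^2)⁻¹ := by
  unfold sS
  refine Finset.sum_congr rfl fun k hk => ?_
  have hnR : (0:ℝ) < n := by exact_mod_cast hn
  have h1 : (n:ℝ) * bTh n k = π/2 + k * π := by
    unfold bTh
    field_simp
    ring
  rw [h1, Real.sin_add_nat_mul_pi, Real.sin_pi_div_two]
  have : (-1:ℝ)^k * (-1:ℝ)^k = 1 := by
    rw [← pow_add]
    exact Even.neg_one_pow ⟨k, by ring⟩
  calc (-1:ℝ)^k * ((Real.sin (bPh n k))^2)⁻¹ * ((-1:ℝ)^k * 1)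
      = ((-1:ℝ)^k * (-1:ℝ)^k) * ((Real.sin (bPh n k))^2)⁻¹ := by ring
    _ = ((Real.sin (bPh n k))^2)⁻¹ := by rw [this, one_mul]

lemma sumB (n : ℕ) (hn : 1 ≤ n) (m : ℕ) (hm : m ≤ n) :
    ∑ k ∈ Finset.range (2*n), (-1:ℝ)^k * ((Real.sin (bPh n k))^2)⁻¹ * Real.sin (m * bTh n k)
      = (m : ℝ) / n * ∑ k ∈ Finset.range (2*n), ((Real.sin (bPh n k))^2)⁻¹ := by
  have hnR : (0:ℝ) < n := by exact_mod_cast hn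
  have h1 := sS_val n hn n (le_refl n)
  rw [sS_top n hn] at h1
  have h2 := sS_val n hn m hm
  show sS n m = _
  rw [h2, h1]
  field_simp

lemma chebT_degree_le (n : ℕ) : (Polynomial.Chebyshev.T ℝ (n:ℤ)).degree ≤ (n : ℕ) := by
  induction n using Nat.strong_induction_on with
  | _ n ih =>
    match n with
    | 0 => simp [Polynomial.Chebyshev.T_zero]
    | 1 => simp [Polynomial.Chebyshev.T_one, Polynomial.degree_X_le]
    | (m+2) =>
      have h1 : ((m+2 : ℕ) : ℤ) = ((m:ℤ) + 2) := by push_cast; ring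
      rw [h1, Polynomial.Chebyshev.T_add_two]
      refine le_trans (Polynomial.degree_sub_le _ _) (max_le ?_ ?_)
      · refine le_trans (Polynomial.degree_mul_le _ _) ?_
        have h2 : (2 * Polynomial.X : ℝ[X]).degree ≤ ((1:ℕ) : WithBot ℕ) := by
          have e : (2 * Polynomial.X : ℝ[X]) = Polynomial.C 2 * Polynomial.X + Polynomial.C 0 := by
            simp [map_ofNat]
          rw [e]
          exact_mod_cast Polynomial.degree_linear_le
        have h3 : (Polynomial.Chebyshev.T ℝ ((m:ℤ)+1)).degree ≤ ((m+1 : ℕ) : WithBot ℕ) := by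
          have := ih (m+1) (by omega)
          rwa [show (((m+1:ℕ)):ℤ) = (m:ℤ)+1 by push_cast; ring] at this
        calc (2 * Polynomial.X : ℝ[X]).degree + (Polynomial.Chebyshev.T ℝ ((m:ℤ)+1)).degree
            ≤ ((1:ℕ) : WithBot ℕ) + ((m+1 : ℕ) : WithBot ℕ) := add_le_add h2 h3
          _ = ((m+2 : ℕ) : WithBot ℕ) := by
              rw [← Nat.cast_add]
              congr 1
              omega
      · refine le_trans (ih m (by omega)) ?_
        exact_mod_cast WithBot.coe_le_coe.mpr (by omega)

lemma chebT_coeff_top (n : ℕ) :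
    (Polynomial.Chebyshev.T ℝ ((n:ℤ)+1)).coeff (n+1) = 2^n := by
  induction n using Nat.strong_induction_on with
  | _ n ih =>
    match n with
    | 0 => simp [Polynomial.Chebyshev.T_one]
    | 1 =>
      rw [show ((1:ℕ):ℤ)+1 = 2 by norm_num, Polynomial.Chebyshev.T_two]
      rw [Polynomial.coeff_sub]
      have e1 : (2 * Polynomial.X^2 : ℝ[X]).coeff 2 = 2 := by
        rw [Polynomial.coeff_ofNat_mul]
        norm_num [Polynomial.coeff_X_pow]
      have e2 : (1 : ℝ[X]).coeff 2 = 0 := by rw [Polynomial.coeff_one]; norm_num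
      rw [show (1+1 : ℕ) = 2 from rfl, e1, e2]
      norm_num
    | (m+2) =>
      have h1 : ((m+2 : ℕ) : ℤ) + 1 = ((m:ℤ) + 1) + 2 := by push_cast; ring
      rw [h1, Polynomial.Chebyshev.T_add_two]
      rw [Polynomial.coeff_sub]
      have hlow : (Polynomial.Chebyshev.T ℝ ((m:ℤ)+1)).coeff (m+3) = 0 := by
        apply Polynomial.coeff_eq_zero_of_degree_lt
        have hd := chebT_degree_le (m+1)
        rw [show (((m+1:ℕ)):ℤ) = (m:ℤ)+1 by push_cast; ring] at hd
        exact lt_of_le_of_lt hd (by exact_mod_cast WithBot.coe_lt_coe.mpr (by omega))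
      have hmul : (2 * Polynomial.X * Polynomial.Chebyshev.T ℝ ((m:ℤ)+1+1)).coeff (m+3)
          = 2 * (Polynomial.Chebyshev.T ℝ ((m:ℤ)+2)).coeff (m+2) := by
        have e : (2 * Polynomial.X * Polynomial.Chebyshev.T ℝ ((m:ℤ)+1+1) : ℝ[X])
            = 2 * (Polynomial.X * Polynomial.Chebyshev.T ℝ ((m:ℤ)+2)) := by
          rw [show ((m:ℤ)+1+1) = (m:ℤ)+2 by ring]; ring
        rw [e]
        rw [Polynomial.coeff_ofNat_mul]
        rw [show (m+3) = (m+2)+1 by ring, Polynomial.coeff_X_mul]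
      have h2 : ((m+1:ℕ):ℤ) + 1 = (m:ℤ)+2 := by push_cast; ring
      have ih1 := ih (m+1) (by omega)
      rw [h2] at ih1
      show (2 * Polynomial.X * Polynomial.Chebyshev.T ℝ ((m:ℤ)+1+1)).coeff (m+2+1)
          - (Polynomial.Chebyshev.T ℝ ((m:ℤ)+1)).coeff (m+2+1) = 2^(m+2)
      rw [show (m+2+1) = m+3 by ring, hmul, hlow, ih1]
      ring

lemma mem_spanT (n : ℕ) : ∀ P : ℝ[X], P.degree ≤ (n:ℕ) →
    P ∈ Submodule.span ℝ ((fun m : ℕ => Polynomial.Chebyshev.T ℝ (m:ℤ)) '' Set.Iic n) := by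
  induction n with
  | zero =>
    intro P hP
    have := Polynomial.eq_C_of_degree_le_zero (by exact_mod_cast hP)
    rw [this]
    have he : P.coeff 0 • Polynomial.Chebyshev.T ℝ ((0:ℕ):ℤ) = Polynomial.C (P.coeff 0) := by
      rw [show ((0:ℕ):ℤ) = 0 from rfl, Polynomial.Chebyshev.T_zero,
        Polynomial.smul_eq_C_mul, mul_one]
    rw [← he]
    exact Submodule.smul_mem _ _ (Submodule.subset_span ⟨0, Set.mem_Iic.mpr (le_refl 0), rfl⟩)
  | succ n ih =>
    intro P hP
    set c : ℝ := P.coeff (n+1) / 2^n with hc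
    set Q : ℝ[X] := P - c • Polynomial.Chebyshev.T ℝ ((n+1:ℕ):ℤ) with hQ
    have hTdeg : (Polynomial.Chebyshev.T ℝ ((n+1:ℕ):ℤ)).degree ≤ ((n+1:ℕ) : WithBot ℕ) :=
      chebT_degree_le (n+1)
    have hQdeg : Q.degree ≤ (n : ℕ) := by
      rw [Polynomial.degree_le_iff_coeff_zero]
      intro m hm
      have hmn : n < m := by exact_mod_cast hm
      rw [hQ, Polynomial.coeff_sub, Polynomial.coeff_smul]
      rcases Nat.eq_or_lt_of_le hmn with h | h
      · have hT : (Polynomial.Chebyshev.T ℝ ((n+1:ℕ):ℤ)).coeff (n+1) = 2^n := by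
          have := chebT_coeff_top n
          rwa [show ((n:ℤ)+1) = ((n+1:ℕ):ℤ) by push_cast; ring] at this
        rw [← h] at *
        rw [hT, hc]
        rw [smul_eq_mul, div_mul_cancel₀ _ (by positivity), sub_self]
      · have hz1 : P.coeff m = 0 := by
          apply Polynomial.coeff_eq_zero_of_degree_lt
          exact lt_of_le_of_lt hP (by exact_mod_cast WithBot.coe_lt_coe.mpr (by omega))
        have hz2 : (Polynomial.Chebyshev.T ℝ ((n+1:ℕ):ℤ)).coeff m = 0 := by
          apply Polynomial.coeff_eq_zero_of_degree_lt
          exact lt_of_le_of_lt hTdeg (by exact_mod_cast WithBot.coe_lt_coe.mpr (by omega))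
        rw [hz1, hz2]
        simp
    have hQmem := ih Q hQdeg
    have hmono : ((fun m : ℕ => Polynomial.Chebyshev.T ℝ (m:ℤ)) '' Set.Iic n)
        ⊆ ((fun m : ℕ => Polynomial.Chebyshev.T ℝ (m:ℤ)) '' Set.Iic (n+1)) :=
      Set.image_mono (Set.Iic_subset_Iic.mpr (by omega))
    have hPQ : P = Q + c • Polynomial.Chebyshev.T ℝ ((n+1:ℕ):ℤ) := by
      rw [hQ]; ring
    rw [hPQ]
    refine Submodule.add_mem _ (Submodule.span_mono hmono hQmem) ?_
    exact Submodule.smul_mem _ _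
      (Submodule.subset_span ⟨n+1, Set.mem_Iic.mpr (le_refl _), rfl⟩)

lemma interp (n : ℕ) (hn : 1 ≤ n) (P : ℝ[X]) (hP : P.degree ≤ (n:ℕ)) (θ : ℝ) :
    ∑ k ∈ Finset.range (2*n), (-1:ℝ)^k * ((Real.sin (bPh n k))^2)⁻¹
        * P.eval (Real.cos (θ + bTh n k))
      = -((∑ k ∈ Finset.range (2*n), ((Real.sin (bPh n k))^2)⁻¹) / n)
          * Real.sin θ * (Polynomial.derivative P).eval (Real.cos θ) := by
  set C : ℝ := ∑ k ∈ Finset.range (2*n), ((Real.sin (bPh n k))^2)⁻¹ with hC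
  have hmem := mem_spanT n P hP
  refine Submodule.span_induction ?mem ?zero ?add ?smul hmem θ
  · rintro x ⟨m, hm, rfl⟩
    intro t
    have hm' : m ≤ n := Set.mem_Iic.mp hm
    have hTk : ∀ k, Polynomial.eval (Real.cos (t + bTh n k)) (Polynomial.Chebyshev.T ℝ (m:ℤ))
        = Real.cos ((m:ℝ)*t) * Real.cos ((m:ℝ)*bTh n k)
          - Real.sin ((m:ℝ)*t) * Real.sin ((m:ℝ)*bTh n k) := by
      intro k
      rw [Polynomial.Chebyshev.T_real_cos]
      push_cast
      rw [mul_add, Real.cos_add]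
    have hcalc : ∑ k ∈ Finset.range (2*n), (-1:ℝ)^k * ((Real.sin (bPh n k))^2)⁻¹
        * Polynomial.eval (Real.cos (t + bTh n k)) (Polynomial.Chebyshev.T ℝ (m:ℤ))
        = Real.cos ((m:ℝ)*t)
            * (∑ k ∈ Finset.range (2*n), (-1:ℝ)^k * ((Real.sin (bPh n k))^2)⁻¹
                * Real.cos ((m:ℝ) * bTh n k))
          - Real.sin ((m:ℝ)*t)
            * (∑ k ∈ Finset.range (2*n), (-1:ℝ)^k * ((Real.sin (bPh n k))^2)⁻¹
                * Real.sin ((m:ℝ) * bTh n k)) := by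
      rw [Finset.mul_sum, Finset.mul_sum, ← Finset.sum_sub_distrib]
      refine Finset.sum_congr rfl fun k _ => ?_
      rw [hTk k]
      ring
    rw [hcalc, sumA n hn m, sumB n hn m hm']
    rw [Polynomial.Chebyshev.T_derivative_eq_U]
    simp only [Polynomial.eval_mul, Polynomial.eval_intCast]
    have hU := Polynomial.Chebyshev.U_real_cos t ((m:ℤ)-1)
    rw [show ((((m:ℤ)-1 : ℤ)):ℝ) + 1 = (m:ℝ) by push_cast; ring] at hU
    rw [← hC, ← hU]
    push_cast
    ring
  · intro t
    simp
  · intro x y hx hy ihx ihy t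
    simp only [Polynomial.eval_add, Polynomial.derivative_add]
    have : ∑ k ∈ Finset.range (2*n), (-1:ℝ)^k * ((Real.sin (bPh n k))^2)⁻¹
        * (Polynomial.eval (Real.cos (t + bTh n k)) x + Polynomial.eval (Real.cos (t + bTh n k)) y)
        = (∑ k ∈ Finset.range (2*n), (-1:ℝ)^k * ((Real.sin (bPh n k))^2)⁻¹
            * Polynomial.eval (Real.cos (t + bTh n k)) x)
          + ∑ k ∈ Finset.range (2*n), (-1:ℝ)^k * ((Real.sin (bPh n k))^2)⁻¹
            * Polynomial.eval (Real.cos (t + bTh n k)) y := by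
      rw [← Finset.sum_add_distrib]
      exact Finset.sum_congr rfl fun k _ => by ring
    rw [this, ihx t, ihy t]
    ring
  · intro a x hx ihx t
    simp only [Polynomial.eval_smul, Polynomial.derivative_smul, smul_eq_mul]
    have : ∑ k ∈ Finset.range (2*n), (-1:ℝ)^k * ((Real.sin (bPh n k))^2)⁻¹
        * (a * Polynomial.eval (Real.cos (t + bTh n k)) x)
        = a * ∑ k ∈ Finset.range (2*n), (-1:ℝ)^k * ((Real.sin (bPh n k))^2)⁻¹
            * Polynomial.eval (Real.cos (t + bTh n k)) x := by
      rw [Finset.mul_sum]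
      exact Finset.sum_congr rfl fun k _ => by ring
    rw [this, ihx t]
    ring

lemma Csum_pos (n : ℕ) (hn : 1 ≤ n) :
    0 < ∑ k ∈ Finset.range (2*n), ((Real.sin (bPh n k))^2)⁻¹ := by
  refine Finset.sum_pos (fun k hk => ?_) ⟨0, Finset.mem_range.mpr (by omega)⟩
  have := sin_bPh_pos hn (Finset.mem_range.mp hk)
  positivity

lemma pointwise_bound (n : ℕ) (hn : 1 ≤ n) (P : ℝ[X]) (hP : P.degree ≤ (n:ℕ)) (t : ℝ) :
    |Real.sin t * (Polynomial.derivative P).eval (Real.cos t)|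
      ≤ ∑ k ∈ Finset.range (2*n),
          ((n:ℝ) / (∑ j ∈ Finset.range (2*n), ((Real.sin (bPh n j))^2)⁻¹))
            * ((Real.sin (bPh n k))^2)⁻¹ * |P.eval (Real.cos (t + bTh n k))| := by
  set C : ℝ := ∑ j ∈ Finset.range (2*n), ((Real.sin (bPh n j))^2)⁻¹ with hC
  have hCpos : 0 < C := Csum_pos n hn
  have hnR : (0:ℝ) < n := by exact_mod_cast hn
  have hid := interp n hn P hP t
  rw [← hC] at hid
  have hx : Real.sin t * (Polynomial.derivative P).eval (Real.cos t)
      = -((n:ℝ)/C) * ∑ k ∈ Finset.range (2*n), (-1:ℝ)^k * ((Real.sin (bPh n k))^2)⁻¹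
          * P.eval (Real.cos (t + bTh n k)) := by
    rw [hid]
    field_simp
  rw [hx, abs_mul, abs_neg, abs_div, abs_of_pos hnR, abs_of_pos hCpos]
  calc (n:ℝ)/C * |∑ k ∈ Finset.range (2*n), (-1:ℝ)^k * ((Real.sin (bPh n k))^2)⁻¹
          * P.eval (Real.cos (t + bTh n k))|
      ≤ (n:ℝ)/C * ∑ k ∈ Finset.range (2*n), |(-1:ℝ)^k * ((Real.sin (bPh n k))^2)⁻¹
          * P.eval (Real.cos (t + bTh n k))| := by
        apply mul_le_mul_of_nonneg_left (Finset.abs_sum_le_sum_abs _ _) (by positivity)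
    _ = ∑ k ∈ Finset.range (2*n), (n:ℝ)/C * ((Real.sin (bPh n k))^2)⁻¹
          * |P.eval (Real.cos (t + bTh n k))| := by
        rw [Finset.mul_sum]
        refine Finset.sum_congr rfl fun k hk => ?_
        have hs := sin_bPh_pos hn (Finset.mem_range.mp hk)
        rw [abs_mul, abs_mul, abs_pow, abs_neg, abs_one, one_pow, one_mul,
          abs_of_pos (by positivity : (0:ℝ) < ((Real.sin (bPh n k))^2)⁻¹)]
        ring

lemma jensen_bound (p : ℝ) (hp : 1 ≤ p) (n : ℕ) (hn : 1 ≤ n) (w a : ℕ → ℝ)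
    (hw : ∀ k ∈ Finset.range (2*n), 0 ≤ w k) (ha : ∀ k ∈ Finset.range (2*n), 0 ≤ a k)
    (hsum : ∑ k ∈ Finset.range (2*n), w k = n) :
    (∑ k ∈ Finset.range (2*n), w k * a k) ^ p
      ≤ (n:ℝ)^(p-1) * ∑ k ∈ Finset.range (2*n), w k * (a k)^p := by
  have hnR : (0:ℝ) < n := by exact_mod_cast hn
  have hjen := (convexOn_rpow hp).map_sum_le (t := Finset.range (2*n))
    (w := fun k => w k / n) (p := a)
    (fun k hk => div_nonneg (hw k hk) (Nat.cast_nonneg n))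
    (by rw [← Finset.sum_div, hsum]; field_simp)
    (fun k hk => Set.mem_Ici.mpr (ha k hk))
  simp only [smul_eq_mul] at hjen
  have h1 : ∑ k ∈ Finset.range (2*n), w k / (n:ℝ) * a k
      = (1/(n:ℝ)) * ∑ k ∈ Finset.range (2*n), w k * a k := by
    rw [Finset.mul_sum]
    exact Finset.sum_congr rfl fun k _ => by ring
  have h2 : ∑ k ∈ Finset.range (2*n), w k / (n:ℝ) * (a k)^p
      = (1/(n:ℝ)) * ∑ k ∈ Finset.range (2*n), w k * (a k)^p := by
    rw [Finset.mul_sum]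
    exact Finset.sum_congr rfl fun k _ => by ring
  rw [h1, h2] at hjen
  have hS : 0 ≤ ∑ k ∈ Finset.range (2*n), w k * a k :=
    Finset.sum_nonneg fun k hk => mul_nonneg (hw k hk) (ha k hk)
  have h3 : ((1/(n:ℝ)) * ∑ k ∈ Finset.range (2*n), w k * a k)^p
      = (1/(n:ℝ))^p * (∑ k ∈ Finset.range (2*n), w k * a k)^p :=
    Real.mul_rpow (by positivity) hS
  rw [h3] at hjen
  have hmul := mul_le_mul_of_nonneg_left hjen (le_of_lt (Real.rpow_pos_of_pos hnR p))
  have h4 : (n:ℝ)^p * ((1/(n:ℝ))^p * (∑ k ∈ Finset.range (2*n), w k * a k)^p)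
      = (∑ k ∈ Finset.range (2*n), w k * a k)^p := by
    rw [← mul_assoc, ← Real.mul_rpow hnR.le (by positivity)]
    rw [mul_one_div, div_self hnR.ne', Real.one_rpow, one_mul]
  have h5 : (n:ℝ)^p * ((1/(n:ℝ)) * ∑ k ∈ Finset.range (2*n), w k * (a k)^p)
      = (n:ℝ)^(p-1) * ∑ k ∈ Finset.range (2*n), w k * (a k)^p := by
    rw [← mul_assoc]
    congr 1
    rw [show p - 1 = p + (-1) by ring, Real.rpow_add hnR, Real.rpow_neg_one]
    ring
  rw [h4, h5] at hmul
  exact hmul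

lemma even_interval_integral (f : ℝ → ℝ) (hf : Continuous f) (heven : ∀ t, f (-t) = f t) :
    ∫ t in (-π)..π, f t = 2 * ∫ t in (0:ℝ)..π, f t := by
  have h1 : ∫ t in (-π)..(0:ℝ), f t = ∫ t in (0:ℝ)..π, f t := by
    have h := intervalIntegral.integral_comp_neg (a := (0:ℝ)) (b := π) f
    rw [neg_zero] at h
    rw [← h]
    exact intervalIntegral.integral_congr fun t _ => heven t
  have h2 := intervalIntegral.integral_add_adjacent_intervals (μ := MeasureTheory.volume)
    (hf.intervalIntegrable (-π) 0) (hf.intervalIntegrable 0 π)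
  linarith

lemma circle_ineq (p : ℝ) (hp : 1 ≤ p) (n : ℕ) (hn : 1 ≤ n) (P : ℝ[X])
    (hP : P.degree ≤ (n:ℕ)) :
    ∫ t in (0:ℝ)..π, |Real.sin t * (Polynomial.derivative P).eval (Real.cos t)| ^ p
      ≤ (n:ℝ)^p * ∫ t in (0:ℝ)..π, |P.eval (Real.cos t)| ^ p := by
  have hnR : (0:ℝ) < n := by exact_mod_cast hn
  have hp0 : (0:ℝ) ≤ p := by linarith
  set C : ℝ := ∑ j ∈ Finset.range (2*n), ((Real.sin (bPh n j))^2)⁻¹ with hC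
  clear_value C
  have hCpos : 0 < C := by rw [hC]; exact Csum_pos n hn
  set w : ℕ → ℝ := fun k => (n:ℝ)/C * ((Real.sin (bPh n k))^2)⁻¹ with hw
  clear_value w
  have hwnn : ∀ k ∈ Finset.range (2*n), 0 ≤ w k := by
    intro k hk
    have := sin_bPh_pos hn (Finset.mem_range.mp hk)
    simp only [hw]
    positivity
  have hwsum : ∑ k ∈ Finset.range (2*n), w k = n := by
    simp only [hw]
    rw [← Finset.mul_sum, ← hC]
    field_simp
  set F : ℝ → ℝ := fun t => |P.eval (Real.cos t)| ^ p with hF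
  clear_value F
  set D : ℝ → ℝ := fun t => |Real.sin t * (Polynomial.derivative P).eval (Real.cos t)| ^ p with hD
  clear_value D
  have contF : Continuous F := by
    rw [hF]
    apply Continuous.rpow_const
    · exact (continuous_abs.comp ((P.continuous).comp Real.continuous_cos))
    · exact fun _ => Or.inr hp0
  have contD : Continuous D := by
    rw [hD]
    apply Continuous.rpow_const
    · exact continuous_abs.comp
        (Real.continuous_sin.mul (((Polynomial.derivative P).continuous).comp Real.continuous_cos))
    · exact fun _ => Or.inr hp0
  have contG : ∀ k : ℕ, Continuous fun t => F (t + bTh n k) :=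
    fun k => contF.comp (continuous_id.add continuous_const)
  have hper : Function.Periodic F (2*π) := by
    intro t
    simp only [hF, Real.cos_add_two_pi]
  -- pointwise bound
  have hpt : ∀ t : ℝ, D t ≤ (n:ℝ)^(p-1) * ∑ k ∈ Finset.range (2*n), w k * F (t + bTh n k) := by
    intro t
    simp only [hD, hF, hw]
    have h0 := pointwise_bound n hn P hP t
    rw [← hC] at h0
    have h1 : |Real.sin t * (Polynomial.derivative P).eval (Real.cos t)|^p
        ≤ (∑ k ∈ Finset.range (2*n),
            (n:ℝ)/C * ((Real.sin (bPh n k))^2)⁻¹ * |P.eval (Real.cos (t + bTh n k))|)^p :=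
      Real.rpow_le_rpow (abs_nonneg _) h0 hp0
    have h2 := jensen_bound p hp n hn (fun k => (n:ℝ)/C * ((Real.sin (bPh n k))^2)⁻¹)
      (fun k => |P.eval (Real.cos (t + bTh n k))|)
      (fun k hk => by
        have := sin_bPh_pos hn (Finset.mem_range.mp hk)
        positivity)
      (fun k _ => abs_nonneg _)
      (by simpa [hw] using hwsum)
    exact le_trans h1 h2
  -- integrate over -π..π
  have hmono : ∫ t in (-π)..π, D t
      ≤ ∫ t in (-π)..π, ((n:ℝ)^(p-1) * ∑ k ∈ Finset.range (2*n), w k * F (t + bTh n k)) := by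
    refine intervalIntegral.integral_mono_on (μ := MeasureTheory.volume)
      (by linarith [Real.pi_pos]) (contD.intervalIntegrable _ _)
      (Continuous.intervalIntegrable ?_ _ _) (fun t _ => hpt t)
    exact continuous_const.mul
      (continuous_finset_sum _ fun k _ => continuous_const.mul (contG k))
  have hsplit : ∫ t in (-π)..π, ((n:ℝ)^(p-1) * ∑ k ∈ Finset.range (2*n), w k * F (t + bTh n k))
      = (n:ℝ)^(p-1) * ∑ k ∈ Finset.range (2*n), w k * ∫ t in (-π)..π, F (t + bTh n k) := by
    rw [intervalIntegral.integral_const_mul]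
    congr 1
    rw [intervalIntegral.integral_finset_sum
      (fun k _ => (by exact (continuous_const.mul (contG k)).intervalIntegrable _ _ :
        IntervalIntegrable (fun t => w k * F (t + bTh n k)) MeasureTheory.volume (-π) π))]
    exact Finset.sum_congr rfl fun k _ => intervalIntegral.integral_const_mul _ _
  have htrans : ∀ k : ℕ, ∫ t in (-π)..π, F (t + bTh n k) = ∫ t in (-π)..π, F t := by
    intro k
    rw [intervalIntegral.integral_comp_add_right F (bTh n k)]
    rw [show π + bTh n k = (-π + bTh n k) + 2*π by ring]
    rw [hper.intervalIntegral_add_eq (-π + bTh n k) (-π)]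
    rw [show -π + 2*π = π by ring]
  have hfinal : (n:ℝ)^(p-1) * ∑ k ∈ Finset.range (2*n), w k * ∫ t in (-π)..π, F t
      = (n:ℝ)^p * ∫ t in (-π)..π, F t := by
    have e : (n:ℝ)^(p-1) * (n:ℝ) = (n:ℝ)^p := by
      have h := Real.rpow_add hnR (p-1) 1
      rw [Real.rpow_one] at h
      rw [← h]
      norm_num
    rw [← Finset.sum_mul, hwsum, ← mul_assoc, e]
  -- evenness
  have hDev : ∀ t, D (-t) = D t := by
    intro t
    simp only [hD, Real.sin_neg, Real.cos_neg, neg_mul, abs_neg]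
  have hFev : ∀ t, F (-t) = F t := by
    intro t
    simp only [hF, Real.cos_neg]
  have hDint := even_interval_integral D contD hDev
  have hFint := even_interval_integral F contF hFev
  have hchain : ∫ t in (-π)..π, D t ≤ (n:ℝ)^p * ∫ t in (-π)..π, F t := by
    calc ∫ t in (-π)..π, D t
        ≤ ∫ t in (-π)..π, ((n:ℝ)^(p-1) * ∑ k ∈ Finset.range (2*n), w k * F (t + bTh n k)) := hmono
      _ = (n:ℝ)^(p-1) * ∑ k ∈ Finset.range (2*n), w k * ∫ t in (-π)..π, F (t + bTh n k) := hsplit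
      _ = (n:ℝ)^(p-1) * ∑ k ∈ Finset.range (2*n), w k * ∫ t in (-π)..π, F t := by
          congr 1
          exact Finset.sum_congr rfl fun k _ => by rw [htrans k]
      _ = (n:ℝ)^p * ∫ t in (-π)..π, F t := hfinal
  rw [hDint, hFint] at hchain
  have hnp : (0:ℝ) ≤ (n:ℝ)^p := Real.rpow_nonneg hnR.le p
  show ∫ t in (0:ℝ)..π, D t ≤ (n:ℝ)^p * ∫ t in (0:ℝ)..π, F t
  linarith

lemma cos_image_Ioo : Real.cos '' Set.Ioo 0 π = Set.Ioo (-1 : ℝ) 1 := by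
  ext y
  constructor
  · rintro ⟨θ, hθ, rfl⟩
    have h1 : Real.cos θ < 1 := by
      have := Real.strictAntiOn_cos (Set.left_mem_Icc.mpr Real.pi_pos.le)
        ⟨hθ.1.le, hθ.2.le⟩ hθ.1
      simpa using this
    have h2 : -1 < Real.cos θ := by
      have := Real.strictAntiOn_cos ⟨hθ.1.le, hθ.2.le⟩
        (Set.right_mem_Icc.mpr Real.pi_pos.le) hθ.2
      simpa using this
    exact ⟨h2, h1⟩
  · intro hy
    refine ⟨Real.arccos y, ⟨?_, ?_⟩, Real.cos_arccos hy.1.le hy.2.le⟩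
    · exact Real.arccos_pos.mpr hy.2
    · have := Real.arccos_le_pi y
      rcases lt_or_eq_of_le this with h | h
      · exact h
      · exfalso
        have : Real.cos (Real.arccos y) = -1 := by rw [h, Real.cos_pi]
        rw [Real.cos_arccos hy.1.le hy.2.le] at this
        linarith [hy.1]

lemma cov_lemma (g : ℝ → ℝ) :
    ∫ x in Set.Ioo (-1 : ℝ) 1, g x = ∫ θ in Set.Ioo (0:ℝ) π, |(-Real.sin θ)| • g (Real.cos θ) := by
  rw [← cos_image_Ioo]
  exact MeasureTheory.integral_image_eq_integral_abs_deriv_smul measurableSet_Ioo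
    (fun x _ => (Real.hasDerivAt_cos x).hasDerivWithinAt)
    (Real.injOn_cos.mono Set.Ioo_subset_Icc_self) g

/-- The `L^p` Bernstein-type inequality of Nagy and Toókos on `[−1,1]`: for `1 ≤ p < ∞`
and every `ε > 0` there is `N` such that for all `n ≥ N` and all real polynomials `P`
of degree at most `n`,
`(∫_{−1}^1 |√(1−x²) P'(x)|^p (π√(1−x²))⁻¹ dx)^{1/p}
  ≤ (1+ε) n (∫_{−1}^1 |P(x)|^p (π√(1−x²))⁻¹ dx)^{1/p}`. -/
theorem lp_bernstein_nagy_tookos (p : ℝ) (hp : 1 ≤ p) :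
    ∀ ε > (0 : ℝ), ∃ N : ℕ, ∀ n ≥ N, ∀ P : Polynomial ℝ, P.degree ≤ n →
      (∫ x in Set.Ioo (-1 : ℝ) 1,
          |Real.sqrt (1 - x ^ 2) * (Polynomial.derivative P).eval x| ^ p *
            (Real.pi * Real.sqrt (1 - x ^ 2))⁻¹) ^ (1 / p) ≤
        (1 + ε) * (n : ℝ) *
          (∫ x in Set.Ioo (-1 : ℝ) 1,
              |P.eval x| ^ p * (Real.pi * Real.sqrt (1 - x ^ 2))⁻¹) ^ (1 / p) := by
  intro ε hε
  refine ⟨1, fun n hn P hP => ?_⟩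
  have hp0 : (0:ℝ) ≤ p := by linarith
  have hpne : p ≠ 0 := by linarith
  have hnR : (0:ℝ) < n := by exact_mod_cast hn
  have hπ := Real.pi_pos
  set A : ℝ := ∫ t in (0:ℝ)..π, |Real.sin t * (Polynomial.derivative P).eval (Real.cos t)| ^ p
    with hA
  set B : ℝ := ∫ t in (0:ℝ)..π, |P.eval (Real.cos t)| ^ p with hB
  have hAnn : 0 ≤ A := by
    rw [hA]
    exact intervalIntegral.integral_nonneg hπ.le
      (fun u _ => Real.rpow_nonneg (abs_nonneg _) p)
  have hBnn : 0 ≤ B := by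
    rw [hB]
    exact intervalIntegral.integral_nonneg hπ.le
      (fun u _ => Real.rpow_nonneg (abs_nonneg _) p)
  have hAB : A ≤ (n:ℝ)^p * B := circle_ineq p hp n hn P hP
  -- change of variables for the two integrals
  have hsin_eq : ∀ θ ∈ Set.Ioo (0:ℝ) π, Real.sqrt (1 - Real.cos θ ^ 2) = Real.sin θ := by
    intro θ hθ
    have h1 : 1 - Real.cos θ ^ 2 = Real.sin θ ^ 2 := by
      rw [← Real.sin_sq_add_cos_sq θ]; ring
    rw [h1, Real.sqrt_sq (Real.sin_pos_of_pos_of_lt_pi hθ.1 hθ.2).le]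
  have hcov1 : (∫ x in Set.Ioo (-1 : ℝ) 1,
      |Real.sqrt (1 - x ^ 2) * (Polynomial.derivative P).eval x| ^ p *
        (Real.pi * Real.sqrt (1 - x ^ 2))⁻¹) = (1/π) * A := by
    rw [cov_lemma]
    have hcong : ∀ θ ∈ Set.Ioo (0:ℝ) π,
        |(-Real.sin θ)| • (|Real.sqrt (1 - Real.cos θ ^ 2)
            * (Polynomial.derivative P).eval (Real.cos θ)| ^ p *
          (Real.pi * Real.sqrt (1 - Real.cos θ ^ 2))⁻¹)
        = (1/π) * |Real.sin θ * (Polynomial.derivative P).eval (Real.cos θ)| ^ p := by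
      intro θ hθ
      have hs := Real.sin_pos_of_pos_of_lt_pi hθ.1 hθ.2
      rw [hsin_eq θ hθ, smul_eq_mul, abs_neg, abs_of_pos hs, mul_inv]
      field_simp
    rw [MeasureTheory.setIntegral_congr_fun measurableSet_Ioo hcong,
      MeasureTheory.integral_const_mul, hA,
      intervalIntegral.integral_of_le hπ.le, MeasureTheory.integral_Ioc_eq_integral_Ioo]
  have hcov2 : (∫ x in Set.Ioo (-1 : ℝ) 1, |P.eval x| ^ p *
      (Real.pi * Real.sqrt (1 - x ^ 2))⁻¹) = (1/π) * B := by
    rw [cov_lemma]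
    have hcong : ∀ θ ∈ Set.Ioo (0:ℝ) π,
        |(-Real.sin θ)| • (|P.eval (Real.cos θ)| ^ p *
          (Real.pi * Real.sqrt (1 - Real.cos θ ^ 2))⁻¹)
        = (1/π) * |P.eval (Real.cos θ)| ^ p := by
      intro θ hθ
      have hs := Real.sin_pos_of_pos_of_lt_pi hθ.1 hθ.2
      rw [hsin_eq θ hθ, smul_eq_mul, abs_neg, abs_of_pos hs, mul_inv]
      field_simp
    rw [MeasureTheory.setIntegral_congr_fun measurableSet_Ioo hcong,
      MeasureTheory.integral_const_mul, hB,
      intervalIntegral.integral_of_le hπ.le, MeasureTheory.integral_Ioc_eq_integral_Ioo]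
  rw [hcov1, hcov2]
  -- final rpow algebra
  have h1 : (1/π) * A ≤ (n:ℝ)^p * ((1/π) * B) := by
    have := mul_le_mul_of_nonneg_left hAB (by positivity : (0:ℝ) ≤ 1/π)
    calc (1/π) * A ≤ (1/π) * ((n:ℝ)^p * B) := this
      _ = (n:ℝ)^p * ((1/π) * B) := by ring
  have hPB : (0:ℝ) ≤ (1/π) * B := mul_nonneg (by positivity) hBnn
  have hPA : (0:ℝ) ≤ (1/π) * A := mul_nonneg (by positivity) hAnn
  have h2 : ((1/π) * A) ^ (1/p) ≤ ((n:ℝ)^p * ((1/π) * B)) ^ (1/p) :=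
    Real.rpow_le_rpow hPA h1 (by positivity)
  have h3 : ((n:ℝ)^p)^(1/p) = (n:ℝ) := by
    rw [← Real.rpow_mul (Nat.cast_nonneg n), mul_one_div, div_self hpne, Real.rpow_one]
  have hX : (0:ℝ) ≤ ((1/π) * B)^(1/p) := Real.rpow_nonneg hPB _
  calc ((1/π) * A) ^ (1/p)
      ≤ ((n:ℝ)^p * ((1/π) * B)) ^ (1/p) := h2
    _ = (n:ℝ) * ((1/π) * B) ^ (1/p) := by
        rw [Real.mul_rpow (Real.rpow_nonneg (Nat.cast_nonneg n) p) hPB, h3]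
    _ ≤ (1 + ε) * (n:ℝ) * ((1/π) * B) ^ (1/p) := by
        have h5 : 0 ≤ ε * ((n:ℝ) * ((1/π) * B) ^ (1/p)) :=
          mul_nonneg hε.le (mul_nonneg hnR.le hX)
        nlinarith [h5]
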